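/- Let E(c) = Σ_i c*_i λ_B(c_i/c*_i) on the closed orthant [0,∞)^n with c* ∈ (0,∞)^n, and let C_q = {c ∈ [0,∞)^n : Q c = q} for a linear map Q: ℝ^n → ℝ^m and q ∈ Q([0,∞)^n). Then E attains a unique minimizer on C_q. -/

import Mathlib

noncomputable def lamBr (r : ℝ) : ℝ := r * Real.log r - r + 1

lemma lamBr_continuous : Continuous lamBr := by
  unfold lamBr
  exact (Real.continuous_mul_log.sub continuous_id).add continuous_const

lemma lamBr_nonneg {r : ℝ} (hr : 0 ≤ r) : 0 ≤ lamBr r := by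
  unfold lamBr
  rcases eq_or_lt_of_le hr with h | h
  · simp [← h]
  · have h1 : Real.log (1/r) ≤ 1/r - 1 := Real.log_le_sub_one_of_pos (by positivity)
    rw [Real.log_div one_ne_zero h.ne', Real.log_one] at h1
    have h2 : 1 - 1/r ≤ Real.log r := by linarith
    nlinarith [mul_le_mul_of_nonneg_left h2 h.le, mul_one_div_cancel h.ne']

lemma lamBr_lower {r : ℝ} (hr : 0 ≤ r) : r - 8 ≤ lamBr r := by
  rcases le_or_gt r 8 with h | h
  · have := lamBr_nonneg hr
    linarith
  · have he : Real.exp 2 ≤ r := by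
      have h9 := Real.exp_one_lt_d9
      have : Real.exp 2 = Real.exp 1 * Real.exp 1 := by
        rw [← Real.exp_add]; norm_num
      nlinarith [Real.exp_pos 1]
    have hlog : (2:ℝ) ≤ Real.log r := (Real.le_log_iff_exp_le (by linarith)).mpr he
    unfold lamBr
    nlinarith

lemma strictConvexOn_lamBr : StrictConvexOn ℝ (Set.Ici (0:ℝ)) lamBr := by
  have h1 : StrictConvexOn ℝ (Set.Ici (0:ℝ)) (fun x => x * Real.log x) :=
    Real.strictConvexOn_mul_log
  have h2 : ConvexOn ℝ (Set.Ici (0:ℝ)) (fun x : ℝ => -x + 1) := by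
    refine ⟨convex_Ici 0, ?_⟩
    intro x _ y _ a b _ _ hab
    simp only [smul_eq_mul]
    nlinarith
  have := h1.add_convexOn h2
  have heq : lamBr = (fun x => x * Real.log x) + fun x : ℝ => -x + 1 := by
    funext x; simp only [Pi.add_apply]; unfold lamBr; ring
  rw [heq]; exact this

theorem unique_minimizer_on_stoichiometric_subset (n m : ℕ)
    (cstar : Fin n → ℝ) (hcstar : ∀ i, 0 < cstar i)
    (Q : (Fin n → ℝ) →ₗ[ℝ] (Fin m → ℝ)) (q : Fin m → ℝ)
    (hq : ∃ c : Fin n → ℝ, (∀ i, 0 ≤ c i) ∧ Q c = q)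
    (E : (Fin n → ℝ) → ℝ)
    (hE : ∀ c, E c = ∑ i, cstar i * lamBr (c i / cstar i)) :
    ∃! chat : Fin n → ℝ,
      ((∀ i, 0 ≤ chat i) ∧ Q chat = q) ∧
        ∀ c : Fin n → ℝ, (∀ i, 0 ≤ c i) → Q c = q → E chat ≤ E c := by
  obtain ⟨c0, hc0n, hc0q⟩ := hq
  have hEcont : Continuous E := by
    have hfe : E = fun c => ∑ i, cstar i * lamBr (c i / cstar i) := funext hE
    rw [hfe]
    exact continuous_finset_sum _ fun i _ =>
      continuous_const.mul (lamBr_continuous.comp ((continuous_apply i).div_const _))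
  have hterm_nn : ∀ (c : Fin n → ℝ), (∀ i, 0 ≤ c i) → ∀ i,
      0 ≤ cstar i * lamBr (c i / cstar i) := fun c hc i =>
    mul_nonneg (hcstar i).le (lamBr_nonneg (div_nonneg (hc i) (hcstar i).le))
  have hEnn : ∀ c : Fin n → ℝ, (∀ i, 0 ≤ c i) → 0 ≤ E c := by
    intro c hc
    rw [hE]
    exact Finset.sum_nonneg fun i _ => hterm_nn c hc i
  -- the compact sublevel set
  set K : Set (Fin n → ℝ) := {c | (∀ i, 0 ≤ c i) ∧ Q c = q ∧ E c ≤ E c0} with hKdef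
  have hKc : IsClosed K := by
    have h1 : IsClosed {c : Fin n → ℝ | ∀ i, 0 ≤ c i} := by
      have : {c : Fin n → ℝ | ∀ i, 0 ≤ c i} = ⋂ i, {c | 0 ≤ c i} := by ext; simp
      rw [this]
      exact isClosed_iInter fun i => isClosed_le continuous_const (continuous_apply i)
    have h2 : IsClosed {c : Fin n → ℝ | Q c = q} :=
      isClosed_eq Q.continuous_of_finiteDimensional continuous_const
    have h3 : IsClosed {c : Fin n → ℝ | E c ≤ E c0} := isClosed_le hEcont continuous_const
    have : K = {c : Fin n → ℝ | ∀ i, 0 ≤ c i} ∩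
        ({c : Fin n → ℝ | Q c = q} ∩ {c : Fin n → ℝ | E c ≤ E c0}) := by
      ext c; simp [hKdef, and_assoc]
    rw [this]; exact h1.inter (h2.inter h3)
  have hcoord : ∀ c ∈ K, ∀ i, c i ≤ 8 * cstar i + E c0 := by
    intro c hc i
    obtain ⟨hcn, _, hcE⟩ := hc
    have hone : cstar i * lamBr (c i / cstar i) ≤ E c := by
      rw [hE]
      exact Finset.single_le_sum (fun j _ => hterm_nn c hcn j) (Finset.mem_univ i)
    have hlow : c i / cstar i - 8 ≤ lamBr (c i / cstar i) :=
      lamBr_lower (div_nonneg (hcn i) (hcstar i).le)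
    have hpos := hcstar i
    have hdiv : cstar i * (c i / cstar i) = c i := by field_simp
    nlinarith [mul_le_mul_of_nonneg_left hlow hpos.le]
  have hKb : Bornology.IsBounded K := by
    rw [isBounded_iff_forall_norm_le]
    refine ⟨8 * (∑ i, cstar i) + E c0, ?_⟩
    intro c hc
    have hC0 : 0 ≤ E c0 := hEnn c0 hc0n
    have hsum : (0:ℝ) ≤ ∑ i, cstar i := Finset.sum_nonneg fun i _ => (hcstar i).le
    rw [pi_norm_le_iff_of_nonneg (by linarith)]
    intro i
    rw [Real.norm_eq_abs, abs_le]
    refine ⟨by linarith [hc.1 i], ?_⟩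
    have h1 := hcoord c hc i
    have h2 : cstar i ≤ ∑ j, cstar j :=
      Finset.single_le_sum (fun j _ => (hcstar j).le) (Finset.mem_univ i)
    linarith
  have hKcomp : IsCompact K := Metric.isCompact_of_isClosed_isBounded hKc hKb
  have hKne : K.Nonempty := ⟨c0, hc0n, hc0q, le_refl _⟩
  obtain ⟨chat, hchatK, hchatmin'⟩ := hKcomp.exists_isMinOn hKne hEcont.continuousOn
  have hchatmin : ∀ c ∈ K, E chat ≤ E c := fun c hc => hchatmin' hc
  obtain ⟨hchatn, hchatq, hchatE⟩ := hchatK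
  -- chat is a global minimizer on the constraint set
  have hmin : ∀ c : Fin n → ℝ, (∀ i, 0 ≤ c i) → Q c = q → E chat ≤ E c := by
    intro c hcn hcq
    rcases le_or_gt (E c) (E c0) with h | h
    · exact hchatmin c ⟨hcn, hcq, h⟩
    · exact le_trans (hchatmin c0 ⟨hc0n, hc0q, le_refl _⟩) h.le
  refine ⟨chat, ⟨⟨hchatn, hchatq⟩, hmin⟩, ?_⟩
  rintro y ⟨⟨hyn, hyq⟩, hymin⟩
  have hEeq : E y = E chat := le_antisymm (hymin chat hchatn hchatq) (hmin y hyn hyq)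
  by_contra hne
  obtain ⟨j, hj⟩ : ∃ j, y j ≠ chat j := by
    by_contra h; push_neg at h; exact hne (funext h)
  set d : Fin n → ℝ := fun i => (y i + chat i) / 2 with hd
  have hdn : ∀ i, 0 ≤ d i := fun i => by
    simp only [hd]
    have := hyn i; have := hchatn i; linarith
  have hdq : Q d = q := by
    have hdeq : d = (2⁻¹ : ℝ) • y + (2⁻¹ : ℝ) • chat := by
      funext i
      simp only [hd, Pi.add_apply, Pi.smul_apply, smul_eq_mul]
      ring
    rw [hdeq, map_add, map_smul, map_smul, hyq, hchatq]
    funext k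
    simp only [Pi.add_apply, Pi.smul_apply, smul_eq_mul]
    ring
  have hmem : ∀ (c : Fin n → ℝ), (∀ i, 0 ≤ c i) → ∀ i, c i / cstar i ∈ Set.Ici (0:ℝ) :=
    fun c hc i => Set.mem_Ici.mpr (div_nonneg (hc i) (hcstar i).le)
  have hdiv : ∀ i, d i / cstar i
      = (2⁻¹:ℝ) • (y i / cstar i) + (2⁻¹:ℝ) • (chat i / cstar i) := by
    intro i
    simp only [hd, smul_eq_mul]
    field_simp
  have hle : ∀ i ∈ Finset.univ, cstar i * lamBr (d i / cstar i) ≤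
      cstar i * ((lamBr (y i / cstar i) + lamBr (chat i / cstar i)) / 2) := by
    intro i _
    have hconv := strictConvexOn_lamBr.convexOn.2 (hmem y hyn i) (hmem chat hchatn i)
      (by norm_num : (0:ℝ) ≤ 2⁻¹) (by norm_num : (0:ℝ) ≤ 2⁻¹) (by norm_num)
    rw [← hdiv i] at hconv
    simp only [smul_eq_mul] at hconv
    have := mul_le_mul_of_nonneg_left hconv (hcstar i).le
    calc cstar i * lamBr (d i / cstar i)
        ≤ cstar i * (2⁻¹ * lamBr (y i / cstar i) + 2⁻¹ * lamBr (chat i / cstar i)) := this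
      _ = cstar i * ((lamBr (y i / cstar i) + lamBr (chat i / cstar i)) / 2) := by ring
  have hlt : cstar j * lamBr (d j / cstar j) <
      cstar j * ((lamBr (y j / cstar j) + lamBr (chat j / cstar j)) / 2) := by
    have hjne : y j / cstar j ≠ chat j / cstar j := by
      intro h
      exact hj (by
        have := congrArg (fun t => t * cstar j) h
        simpa [div_mul_cancel₀, (hcstar j).ne'] using this)
    have hconv := strictConvexOn_lamBr.2 (hmem y hyn j) (hmem chat hchatn j) hjne
      (by norm_num : (0:ℝ) < 2⁻¹) (by norm_num : (0:ℝ) < 2⁻¹) (by norm_num)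
    rw [← hdiv j] at hconv
    simp only [smul_eq_mul] at hconv
    have := mul_lt_mul_of_pos_left hconv (hcstar j)
    calc cstar j * lamBr (d j / cstar j)
        < cstar j * (2⁻¹ * lamBr (y j / cstar j) + 2⁻¹ * lamBr (chat j / cstar j)) := this
      _ = cstar j * ((lamBr (y j / cstar j) + lamBr (chat j / cstar j)) / 2) := by ring
  have hEd : E d < (E y + E chat) / 2 := by
    rw [hE d, hE y, hE chat, ← Finset.sum_add_distrib]
    calc ∑ i, cstar i * lamBr (d i / cstar i)
        < ∑ i, cstar i * ((lamBr (y i / cstar i) + lamBr (chat i / cstar i)) / 2) :=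
          Finset.sum_lt_sum hle ⟨j, Finset.mem_univ j, hlt⟩
      _ = (∑ i, (cstar i * lamBr (y i / cstar i) + cstar i * lamBr (chat i / cstar i))) / 2 := by
          rw [Finset.sum_div]
          exact Finset.sum_congr rfl fun i _ => by ring
  have : E chat ≤ E d := hmin d hdn hdq
  rw [hEeq] at hEd
  linarith
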